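/- Let N be an integer with N ≥ 6, and define (as integers) n = ⌊(N − 1)/5⌋, k = ⌈log₂ n⌉, K = 5 + 4k, and x = N − (K + 5(n − ⌈K/5⌉)). Then 1 ≤ x ≤ 9. -/

import Mathlib

open Real in
/-- Parameters of the prgTAS square construction: for `N ≥ 6`, with
`n = ⌊(N-1)/5⌋`, `k = ⌈log₂ n⌉`, `K = 5 + 4k` and
`x = N - (K + 5(n - ⌈K/5⌉))`, we have `1 ≤ x ≤ 9`. -/
theorem prgTAS_square_cap_bound (N : ℤ) (hN : 6 ≤ N)
    (n k K x : ℤ)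
    (hn : n = ⌊((N : ℚ) - 1) / 5⌋)
    (hk : k = ⌈logb 2 (n : ℝ)⌉)
    (hK : K = 5 + 4 * k)
    (hx : x = N - (K + 5 * (n - ⌈(K : ℚ) / 5⌉))) :
    1 ≤ x ∧ x ≤ 9 := by
  set c : ℤ := ⌈(K : ℚ) / 5⌉ with hc
  -- floor bounds for n
  have h1 : (n : ℚ) ≤ ((N : ℚ) - 1) / 5 := hn ▸ Int.floor_le _
  have h2 : ((N : ℚ) - 1) / 5 < (n : ℚ) + 1 := hn ▸ Int.lt_floor_add_one _
  have hn1 : 5 * n + 1 ≤ N := by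
    have := (le_div_iff₀ (by norm_num : (0:ℚ) < 5)).mp h1
    have : (5 : ℚ) * n + 1 ≤ (N : ℚ) := by linarith
    exact_mod_cast this
  have hn2 : N ≤ 5 * n + 5 := by
    have := (div_lt_iff₀ (by norm_num : (0:ℚ) < 5)).mp h2
    have h : (N : ℚ) < 5 * n + 6 := by linarith
    have : N < 5 * n + 6 := by exact_mod_cast h
    omega
  -- ceiling bounds for c
  have h3 : (K : ℚ) / 5 ≤ (c : ℚ) := Int.le_ceil _
  have h4 : (c : ℚ) < (K : ℚ) / 5 + 1 := hc ▸ Int.ceil_lt_add_one _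
  have hc1 : K ≤ 5 * c := by
    have := (div_le_iff₀ (by norm_num : (0:ℚ) < 5)).mp h3
    exact_mod_cast (by linarith : (K : ℚ) ≤ 5 * c)
  have hc2 : 5 * c ≤ K + 4 := by
    have := (lt_div_iff₀ (by norm_num : (0:ℚ) < 5)).mp (by linarith : (c:ℚ) - 1 < (K:ℚ)/5)
    have : (5 : ℚ) * c < K + 5 := by linarith
    have : 5 * c < K + 5 := by exact_mod_cast this
    omega
  constructor <;> omega
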